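/- With F_{C→D} = 4 M κ N_S (N_S+1) / (1 + N_B + N_S(2N_B + 2 - κ)) and F_CS = 4 M κ N_S / (1 + 2 N_B), for fixed M > 0, κ ∈ (0,1), N_S > 0, the limit of F_{C→D}/F_CS as N_B → ∞ equals 2(N_S+1)/(1+2N_S); in particular this limit tends to 2 as N_S → 0. -/

import Mathlib

open Filter Topology

/-- the ratio `F_{C→D}/F_CS` tends to `2(N_S+1)/(1+2N_S)` as
`N_B → ∞`, and this limit tends to `2` as `N_S → 0⁺`. -/
theorem stmt5 (M κ NS : ℝ) (hM : 0 < M) (hκ0 : 0 < κ) (hκ1 : κ < 1) (hNS : 0 < NS) :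
    Tendsto (fun NB : ℝ =>
        (4 * M * κ * NS * (NS + 1) / (1 + NB + NS * (2 * NB + 2 - κ)))
          / (4 * M * κ * NS / (1 + 2 * NB)))
      atTop (𝓝 (2 * (NS + 1) / (1 + 2 * NS))) ∧
    Tendsto (fun nS : ℝ => 2 * (nS + 1) / (1 + 2 * nS))
      (𝓝[>] (0 : ℝ)) (𝓝 2) := by
  constructor
  · have hden : (1 : ℝ) + 2 * NS ≠ 0 := by nlinarith
    have hg : Tendsto (fun NB : ℝ =>
        (NS + 1) * (2 + 1 / NB) / ((1 + 2 * NS) + (1 + NS * (2 - κ)) / NB))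
        atTop (𝓝 (2 * (NS + 1) / (1 + 2 * NS))) := by
      have h0 : Tendsto (fun NB : ℝ => 1 / NB) atTop (𝓝 (0:ℝ)) := by
        simpa [one_div] using (tendsto_inv_atTop_zero : Tendsto (fun x : ℝ => x⁻¹) atTop (𝓝 0))
      have hnum : Tendsto (fun NB : ℝ => (NS + 1) * (2 + 1 / NB)) atTop (𝓝 ((NS + 1) * 2)) := by
        have h2' : Tendsto (fun NB : ℝ => (2:ℝ) + 1 / NB) atTop (𝓝 (2 + 0)) :=
          tendsto_const_nhds.add h0
        simpa using h2'.const_mul (NS + 1)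
      have hden2 : Tendsto (fun NB : ℝ => (1 + 2 * NS) + (1 + NS * (2 - κ)) / NB) atTop
          (𝓝 (1 + 2 * NS)) := by
        have h0' : Tendsto (fun NB : ℝ => (1 + NS * (2 - κ)) / NB) atTop (𝓝 0) := by
          simpa [div_eq_mul_inv] using h0.const_mul (1 + NS * (2 - κ))
        simpa using tendsto_const_nhds.add h0'
      have this : Tendsto (fun NB : ℝ =>
          (NS + 1) * (2 + 1 / NB) / ((1 + 2 * NS) + (1 + NS * (2 - κ)) / NB)) atTop
          (𝓝 ((NS + 1) * 2 / (1 + 2 * NS))) := hnum.div hden2 hden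
      convert this using 2
      ring
    refine hg.congr' ?_
    filter_upwards [eventually_gt_atTop (0 : ℝ)] with NB hNB
    have h1 : (1 : ℝ) + NB + NS * (2 * NB + 2 - κ) ≠ 0 := by nlinarith
    have h2 : (1 : ℝ) + 2 * NB ≠ 0 := by nlinarith
    have h3 : (4 : ℝ) * M * κ * NS ≠ 0 := by positivity
    have h4 : NB ≠ 0 := hNB.ne'
    have hq : ((1 + 2 * NS) + (1 + NS * (2 - κ)) / NB) ≠ 0 := by
      have : 0 < (1 + NS * (2 - κ)) / NB := div_pos (by nlinarith) hNB
      nlinarith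
    rw [div_div_div_comm, show 4 * M * κ * NS * (NS + 1) = (NS + 1) * (4 * M * κ * NS) from by
      ring, mul_div_cancel_right₀ _ h3, div_div_eq_mul_div, div_eq_div_iff hq h1]
    field_simp
    ring
  · have : ContinuousAt (fun nS : ℝ => 2 * (nS + 1) / (1 + 2 * nS)) 0 := by
      apply ContinuousAt.div (by fun_prop) (by fun_prop); norm_num
    have h : Tendsto (fun nS : ℝ => 2 * (nS + 1) / (1 + 2 * nS)) (𝓝[>] (0:ℝ))
        (𝓝 (2 * ((0:ℝ) + 1) / (1 + 2 * 0))) := this.tendsto.mono_left nhdsWithin_le_nhds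
    simpa using h
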